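/- Let u : ℝ≥0 → ℝ be strictly quasiconcave and attain its maximum at a unique point x⋆ ∈ ℝ≥0, let c₁ : ℝ≥0 → ℝ≥0 be strictly increasing, let x_s ∈ ℝ≥0, and let V : ℝ≥0 → ℝ be upper semicontinuous. Then there exist two asymmetric binary relations ≻₁ and ≻₂ on ℝ≥0 such that the set of maximizers of V over max(ℝ≥0, ≽) equals max(max(ℝ≥0, ≻₁), ≻₂), where for a set A ⊆ ℝ≥0 and a relation ≻, max(A, ≻) = {x ∈ A : there is no y ∈ A with y ≻ x}. In particular this set of maximizers is nonempty, i.e., the two-stage procedure defines a partial choice correspondence that is rational by two sequential criteria. -/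

import Mathlib

open NNReal Set

/-- Strict quasiconcavity of a function `u : ℝ≥0 → ℝ`:
for all distinct `x, y` and all `λ ∈ (0,1)`, `u (λx + (1-λ)y) > min (u x) (u y)`. -/
def StrictQuasiconcave (u : ℝ≥0 → ℝ) : Prop :=
  ∀ x y : ℝ≥0, x ≠ y → ∀ l : ℝ≥0, 0 < l → l < 1 →
    min (u x) (u y) < u (l * x + (1 - l) * y)

/-- The one-many ordering `x ≽ y` on `ℝ≥0`, given personal utility `u`,
cost `c₁` of current social distance, and social reference point `xs`. -/
def OneMany (u : ℝ≥0 → ℝ) (c₁ : ℝ≥0 → ℝ≥0) (xs : ℝ≥0) (x y : ℝ≥0) : Prop :=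
  u y ≤ u x ∧ c₁ (nndist x xs) ≤ c₁ (nndist y xs)

/-- The strict part `x ≻ y` of the one-many ordering. -/
def OneManyStrict (u : ℝ≥0 → ℝ) (c₁ : ℝ≥0 → ℝ≥0) (xs : ℝ≥0) (x y : ℝ≥0) : Prop :=
  OneMany u c₁ xs x y ∧ ¬ OneMany u c₁ xs y x

/-- The set `max(ℝ≥0, ≽)` of maximal elements of the one-many ordering:
the agent's consideration set. -/
def maxSet (u : ℝ≥0 → ℝ) (c₁ : ℝ≥0 → ℝ≥0) (xs : ℝ≥0) : Set ℝ≥0 :=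
  {x : ℝ≥0 | ¬ ∃ y : ℝ≥0, OneManyStrict u c₁ xs y x}

/-- The set of elements of `A` not strictly dominated within `A` by the relation `r`. -/
def maxOf (r : ℝ≥0 → ℝ≥0 → Prop) (A : Set ℝ≥0) : Set ℝ≥0 :=
  {x ∈ A | ¬ ∃ y ∈ A, r y x}

lemma usc_exists_max {s : Set ℝ≥0} (hs : IsCompact s) (hne : s.Nonempty)
    {f : ℝ≥0 → ℝ} (hf : UpperSemicontinuous f) :
    ∃ x ∈ s, ∀ y ∈ s, f y ≤ f x := by
  have h := hs.inter_iInter_nonempty (ι := s) (fun y => f ⁻¹' Ici (f y.1))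
    (fun y => hf.isClosed_preimage _) ?_
  · obtain ⟨x, hxs, hx⟩ := h
    exact ⟨x, hxs, fun y hy => mem_iInter.1 hx ⟨y, hy⟩⟩
  · intro t
    rcases t.eq_empty_or_nonempty with rfl | ht
    · simpa using hne
    · obtain ⟨b, hb, hbmax⟩ := t.exists_max_image (fun y => f y.1) ht
      refine ⟨b.1, b.2, ?_⟩
      simp only [mem_iInter₂, mem_preimage, mem_Ici]
      exact fun y hy => hbmax y hy

lemma mid {u : ℝ≥0 → ℝ} (hu : StrictQuasiconcave u) {x b z : ℝ≥0}
    (h1 : x < b) (h2 : b < z) : min (u x) (u z) < u b := by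
  set l : ℝ≥0 := (z - b) / (z - x) with hl
  have hxz : x < z := h1.trans h2
  have hxzr : (x : ℝ) < z := hxz
  have h1r : (x : ℝ) < b := h1
  have h2r : (b : ℝ) < z := h2
  have hcoe : (l : ℝ) = ((z : ℝ) - b) / ((z : ℝ) - x) := by
    rw [hl]
    push_cast [NNReal.coe_sub h2.le, NNReal.coe_sub hxz.le]
    ring
  have hl0 : 0 < l := by
    rw [← NNReal.coe_pos, hcoe]
    apply div_pos <;> linarith
  have hl1 : l < 1 := by
    rw [← NNReal.coe_lt_coe, hcoe]
    rw [NNReal.coe_one, div_lt_one (by linarith)]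
    linarith
  have key : l * x + (1 - l) * z = b := by
    apply NNReal.coe_injective
    push_cast [NNReal.coe_sub hl1.le]
    rw [hcoe]
    have hne : (z : ℝ) - x ≠ 0 := by linarith
    field_simp
    ring
  have := hu x z hxz.ne l hl0 hl1
  rwa [key] at this

/-- moving strictly towards the peak strictly increases `u`. -/
lemma toward {u : ℝ≥0 → ℝ} {xstar : ℝ≥0} (hu : StrictQuasiconcave u)
    (hmax : ∀ y : ℝ≥0, u y ≤ u xstar)
    (huniq : ∀ y : ℝ≥0, (∀ z : ℝ≥0, u z ≤ u y) → y = xstar)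
    {x b : ℝ≥0} (h : (x < b ∧ b ≤ xstar) ∨ (xstar ≤ b ∧ b < x)) : u x < u b := by
  have hxb : x ≠ b := by rcases h with ⟨h1, _⟩ | ⟨_, h2⟩; exacts [h1.ne, h2.ne']
  have hxstar : x ≠ xstar := by
    rintro rfl
    rcases h with ⟨h1, h2⟩ | ⟨h1, h2⟩
    · exact absurd h2 (not_le.2 h1)
    · exact absurd h1 (not_le.2 h2)
  have hlt : u x < u xstar := by
    rcases lt_or_eq_of_le (hmax x) with h' | h'
    · exact h'
    · exact absurd (huniq x (fun z => (hmax z).trans h'.ge)) hxstar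
  rcases h with ⟨h1, h2⟩ | ⟨h1, h2⟩
  · rcases lt_or_eq_of_le h2 with h2' | rfl
    · have := mid hu h1 h2'
      rwa [min_eq_left hlt.le] at this
    · exact hlt
  · rcases lt_or_eq_of_le h1 with h1' | rfl
    · have := mid hu h1' h2
      rwa [min_eq_right hlt.le] at this
    · exact hlt

lemma maxSet_eq {u : ℝ≥0 → ℝ} {c₁ : ℝ≥0 → ℝ≥0} {xstar xs : ℝ≥0}
    (hu : StrictQuasiconcave u)
    (hmax : ∀ y : ℝ≥0, u y ≤ u xstar)
    (huniq : ∀ y : ℝ≥0, (∀ z : ℝ≥0, u z ≤ u y) → y = xstar)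
    (hc : StrictMono c₁) :
    maxSet u c₁ xs = Icc (min xstar xs) (max xstar xs) := by
  ext x
  simp only [maxSet, mem_setOf_eq, mem_Icc]
  constructor
  · -- if x is maximal then x is in the interval
    intro hx
    by_contra hcon
    apply hx
    rw [not_and_or, not_le, not_le] at hcon
    rcases le_total xstar xs with hsx | hsx
    · rw [min_eq_left hsx, max_eq_right hsx] at hcon
      rcases hcon with h | h
      · -- x < xstar ≤ xs : dominated by xstar
        refine ⟨xstar, ⟨⟨(toward hu hmax huniq (Or.inl ⟨h, le_refl _⟩)).le, hc.monotone ?_⟩,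
          fun hcontra => absurd hcontra.1
            (not_le.2 (toward hu hmax huniq (Or.inl ⟨h, le_refl _⟩)))⟩⟩
        rw [← NNReal.coe_le_coe, coe_nndist, coe_nndist, NNReal.dist_eq, NNReal.dist_eq]
        have h1 : (x : ℝ) < xstar := h
        have h2 : (xstar : ℝ) ≤ xs := hsx
        rw [abs_of_nonpos (by linarith), abs_of_nonpos (by linarith)]
        linarith
      · -- xstar ≤ xs < x : dominated by xs
        have hd : nndist x xs ≠ 0 := fun h0 => h.ne' (nndist_eq_zero.1 h0)
        have hule : u x ≤ u xs := by
          rcases lt_or_eq_of_le hsx with h' | rfl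
          · exact (toward hu hmax huniq (Or.inr ⟨h'.le, h⟩)).le
          · exact hmax x
        refine ⟨xs, ⟨⟨hule, hc.monotone (by simp)⟩, fun hcontra => ?_⟩⟩
        have := (hc.le_iff_le).1 hcontra.2
        rw [nndist_self] at this
        exact hd (le_antisymm this (zero_le'))
    · rw [min_eq_right hsx, max_eq_left hsx] at hcon
      rcases hcon with h | h
      · -- x < xs ≤ xstar : dominated by xs
        have hd : nndist x xs ≠ 0 := fun h0 => h.ne (nndist_eq_zero.1 h0)
        have hule : u x ≤ u xs := by
          rcases lt_or_eq_of_le hsx with h' | h'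
          · exact (toward hu hmax huniq (Or.inl ⟨h, h'.le⟩)).le
          · rw [h']; exact hmax x
        refine ⟨xs, ⟨⟨hule, hc.monotone (by simp)⟩, fun hcontra => ?_⟩⟩
        have := (hc.le_iff_le).1 hcontra.2
        rw [nndist_self] at this
        exact hd (le_antisymm this (zero_le'))
      · -- xs ≤ xstar < x : dominated by xstar
        refine ⟨xstar, ⟨⟨(toward hu hmax huniq (Or.inr ⟨le_refl _, h⟩)).le, hc.monotone ?_⟩,
          fun hcontra => absurd hcontra.1
            (not_le.2 (toward hu hmax huniq (Or.inr ⟨le_refl _, h⟩)))⟩⟩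
        rw [← NNReal.coe_le_coe, coe_nndist, coe_nndist, NNReal.dist_eq, NNReal.dist_eq]
        have h1 : (xstar : ℝ) < x := h
        have h2 : (xs : ℝ) ≤ xstar := hsx
        rw [abs_of_nonneg (by linarith), abs_of_nonneg (by linarith)]
        linarith
  · -- points of the interval are maximal
    rintro ⟨hm, hM⟩ ⟨y, ⟨⟨hyu, hyc⟩, hnot⟩⟩
    have hdist : nndist y xs ≤ nndist x xs := (hc.le_iff_le).1 hyc
    have hdr : |(y : ℝ) - xs| ≤ |(x : ℝ) - xs| := by
      rw [← NNReal.coe_le_coe, coe_nndist, coe_nndist, NNReal.dist_eq, NNReal.dist_eq] at hdist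
      exact hdist
    rcases le_total xstar xs with hsx | hsx
    · rw [min_eq_left hsx] at hm
      rw [max_eq_right hsx] at hM
      -- xstar ≤ x ≤ xs, so |x - xs| = xs - x, and |y - xs| ≤ xs - x gives x ≤ y
      have hMr : (x : ℝ) ≤ xs := hM
      have hxy : x ≤ y := by
        rw [← NNReal.coe_le_coe]
        have h1 : (xs : ℝ) - y ≤ |(y : ℝ) - xs| := by
          rw [abs_sub_comm]; exact le_abs_self _
        rw [abs_of_nonpos (show (x:ℝ) - xs ≤ 0 by linarith)] at hdr
        linarith
      rcases lt_or_eq_of_le hxy with hxy' | rfl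
      · exact absurd hyu (not_le.2 (toward hu hmax huniq (Or.inr ⟨hm, hxy'⟩)))
      · exact hnot ⟨hyu, hyc⟩
    · rw [min_eq_right hsx] at hm
      rw [max_eq_left hsx] at hM
      -- xs ≤ x ≤ xstar, so |x - xs| = x - xs, and |y - xs| ≤ x - xs gives y ≤ x
      have hmr : (xs : ℝ) ≤ x := hm
      have hxy : y ≤ x := by
        rw [← NNReal.coe_le_coe]
        have h1 : (y : ℝ) - xs ≤ |(y : ℝ) - xs| := le_abs_self _
        rw [abs_of_nonneg (show (0:ℝ) ≤ (x:ℝ) - xs by linarith)] at hdr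
        linarith
      rcases lt_or_eq_of_le hxy with hxy' | rfl
      · exact absurd hyu (not_le.2 (toward hu hmax huniq (Or.inl ⟨hxy', hM⟩)))
      · exact hnot ⟨hyu, hyc⟩

theorem rational_by_two_sequential_criteria
    (u : ℝ≥0 → ℝ) (c₁ : ℝ≥0 → ℝ≥0) (xstar xs : ℝ≥0)
    (hu : StrictQuasiconcave u)
    (hmax : ∀ y : ℝ≥0, u y ≤ u xstar)
    (huniq : ∀ y : ℝ≥0, (∀ z : ℝ≥0, u z ≤ u y) → y = xstar)
    (hc : StrictMono c₁)
    (V : ℝ≥0 → ℝ) (hV : UpperSemicontinuous V) :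
    ∃ r₁ r₂ : ℝ≥0 → ℝ≥0 → Prop,
      (∀ x y, r₁ x y → ¬ r₁ y x) ∧
      (∀ x y, r₂ x y → ¬ r₂ y x) ∧
      {x ∈ maxSet u c₁ xs | ∀ y ∈ maxSet u c₁ xs, V y ≤ V x}
        = maxOf r₂ (maxOf r₁ Set.univ) ∧
      {x ∈ maxSet u c₁ xs | ∀ y ∈ maxSet u c₁ xs, V y ≤ V x}.Nonempty := by
  refine ⟨OneManyStrict u c₁ xs, fun a b => V b < V a, ?_, ?_, ?_, ?_⟩
  · rintro x y ⟨h1, h2⟩ ⟨h3, h4⟩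
    exact h2 h3
  · intro x y h
    exact not_lt.2 h.le
  · have h1 : maxOf (OneManyStrict u c₁ xs) Set.univ = maxSet u c₁ xs := by
      ext x
      simp [maxOf, maxSet]
    rw [h1]
    ext x
    simp only [maxOf, mem_setOf_eq, mem_sep_iff]
    constructor
    · rintro ⟨h, hall⟩
      exact ⟨h, fun ⟨y, hy, hlt⟩ => absurd (hall y hy) (not_le.2 hlt)⟩
    · rintro ⟨h, hnot⟩
      exact ⟨h, fun y hy => not_lt.1 fun hlt => hnot ⟨y, hy, hlt⟩⟩
  · have hset := maxSet_eq (xs := xs) hu hmax huniq hc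
    have hcomp : IsCompact (maxSet u c₁ xs) := by
      rw [hset]; exact isCompact_Icc
    have hne : (maxSet u c₁ xs).Nonempty := by
      rw [hset]; exact nonempty_Icc.2 min_le_max
    obtain ⟨x, hx, hmaxV⟩ := usc_exists_max hcomp hne hV
    exact ⟨x, hx, hmaxV⟩
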